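/- Every minimally invariant set S satisfies S ⊆ AN_Y; consequently, S_AS ⊆ AN_Y. -/

import Mathlib

/-- Nodes of the graph: the environment node `E`, predictor nodes `V j` for
`j ∈ {1, …, d}` (represented by `Fin d`), and the response node `Y`. -/
inductive Node (d : ℕ) : Type where
  | E : Node d
  | V : Fin d → Node d
  | Y : Node d
deriving DecidableEq

/-- A directed acyclic graph on `{E} ∪ {1, …, d} ∪ {Y}` in which `E` has no
parents (`E` is exogenous). -/
structure CGraph (d : ℕ) where
  adj : Node d → Node d → Prop
  acyclic : ∀ v, ¬ Relation.TransGen adj v v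
  exogenous : ∀ v, ¬ adj v Node.E

namespace CGraph

variable {d : ℕ} (G : CGraph d)

/-- Undirected adjacency: an edge between `u` and `v` in either direction. -/
def Edge (u v : Node d) : Prop := G.adj u v ∨ G.adj v u

/-- `p` is a path between `a` and `b`: a duplicate-free list of nodes starting
at `a`, ending at `b`, with consecutive nodes adjacent (in either direction). -/
def IsPath (p : List (Node d)) (a b : Node d) : Prop :=
  p.head? = some a ∧ p.getLast? = some b ∧ p.Nodup ∧ p.Chain' G.Edge

/-- `x` is a (strict) descendant of `v`. -/
def Desc (v x : Node d) : Prop := Relation.TransGen G.adj v x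

/-- The consecutive triple `u, m, w` on a path blocks the path given `C`:
either `m` is a non-collider lying in `C`, or `m` is a collider such that
neither `m` nor any of its descendants lies in `C`. -/
def BlockedAt (C : Set (Node d)) (u m w : Node d) : Prop :=
  (¬ (G.adj u m ∧ G.adj w m) ∧ m ∈ C) ∨
  ((G.adj u m ∧ G.adj w m) ∧ m ∉ C ∧ ∀ x, G.Desc m x → x ∉ C)

/-- A path `p` is blocked by `C` if some consecutive triple on it blocks it. -/
def Blocked (C : Set (Node d)) (p : List (Node d)) : Prop :=
  ∃ q u m w r, p = q ++ u :: m :: w :: r ∧ G.BlockedAt C u m w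

/-- `a` and `b` are d-separated given `C`: every path between them is blocked. -/
def DSep (a b : Node d) (C : Set (Node d)) : Prop :=
  ∀ p, G.IsPath p a b → G.Blocked C p

/-- `S ⊆ {1, …, d}` is invariant if `E` and `Y` are d-separated given `S`. -/
def Invariant (S : Set (Fin d)) : Prop := G.DSep Node.E Node.Y (Node.V '' S)

/-- `S` is minimally invariant if it is invariant and no strict subset of `S`
is invariant. -/
def MinInvariant (S : Set (Fin d)) : Prop :=
  G.Invariant S ∧ ∀ S', S' ⊂ S → ¬ G.Invariant S'

/-- `S_AS`: the union of all minimally invariant sets. -/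
def SAS : Set (Fin d) := ⋃₀ {S | G.MinInvariant S}

/-- `S_ICP`: the intersection of all invariant sets (`∅` if there are none). -/
def SICP : Set (Fin d) :=
  {j | (∃ S, G.Invariant S) ∧ ∀ S, G.Invariant S → j ∈ S}

/-- `S_AS^m`: the union of all minimally invariant sets of cardinality `≤ m`. -/
def SASm (m : ℕ) : Set (Fin d) := ⋃₀ {S | G.MinInvariant S ∧ S.ncard ≤ m}

/-- The parents of `Y` among `{1, …, d}`. -/
def paY : Set (Fin d) := {j | G.adj (Node.V j) Node.Y}

/-- The children of `E` among `{1, …, d}`. -/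
def chE : Set (Fin d) := {j | G.adj Node.E (Node.V j)}

/-- The ancestors of `Y` among `{1, …, d}`. -/
def anY : Set (Fin d) := {j | Relation.TransGen G.adj (Node.V j) Node.Y}

/-- `PA(A)`: the union of the parent sets of the elements of `A ⊆ {1, …, d}`. -/
def paOf (A : Set (Fin d)) : Set (Fin d) := {j | ∃ i ∈ A, G.adj (Node.V j) (Node.V i)}

end CGraph

private lemma notTransGenE {d : ℕ} (G : CGraph d) (m : Node d) :
    ¬ Relation.TransGen G.adj m Node.E := by
  intro h
  cases h with
  | single h => exact G.exogenous _ h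
  | tail _ h => exact G.exogenous _ h

/-- Walk lemma: starting with a directed edge `m → w` along a chain that ends at `z`,
if every collider triple has itself or a descendant in `C`, and every element of `C`
reaches `Y`, then `m` reaches `Y` or reaches `z` by a directed path. -/
private lemma walk {d : ℕ} (G : CGraph d) (C : Set (Node d))
    (hC : ∀ v ∈ C, v = Node.Y ∨ Relation.TransGen G.adj v Node.Y) :
    ∀ (r : List (Node d)) (m w z : Node d), G.adj m w →
      List.Chain' G.Edge (w :: r) →
      (w :: r).getLast? = some z →
      (∀ a b c, G.adj a b → G.adj c b → [a, b, c] <:+: (m :: w :: r) →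
        (b ∈ C ∨ ∃ x, G.Desc b x ∧ x ∈ C)) →
      Relation.TransGen G.adj m Node.Y ∨ Relation.TransGen G.adj m z := by
  intro r
  induction r with
  | nil =>
    intro m w z hmw _ hlast _
    simp at hlast
    subst hlast
    exact Or.inr (Relation.TransGen.single hmw)
  | cons w' r' ih =>
    intro m w z hmw hch hlast H
    have hedge : G.Edge w w' := (List.isChain_cons_cons.mp hch).1
    rcases hedge with hww' | hw'w
    · have hsub : ∀ a b c, G.adj a b → G.adj c b → [a, b, c] <:+: (w :: w' :: r') →
          (b ∈ C ∨ ∃ x, G.Desc b x ∧ x ∈ C) := by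
        intro a b c hab hcb hinf
        exact H a b c hab hcb (hinf.trans (List.suffix_cons m (w :: w' :: r')).isInfix)
      have := ih w w' z hww' (List.isChain_cons_cons.mp hch).2
        (by rwa [List.getLast?_cons_cons] at hlast) hsub
      exact this.imp (fun h => h.head hmw) (fun h => h.head hmw)
    · -- collider at w
      have hcol := H m w w' hmw hw'w ⟨[], r', by simp⟩
      left
      rcases hcol with hwC | ⟨x, hdx, hxC⟩
      · rcases hC w hwC with rfl | hwy
        · exact Relation.TransGen.single hmw
        · exact hwy.head hmw
      · rcases hC x hxC with rfl | hxy
        · exact Relation.TransGen.head hmw hdx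
        · exact Relation.TransGen.head hmw (hdx.trans hxy)

private lemma invariant_inter {d : ℕ} (G : CGraph d) (S : Set (Fin d))
    (hS : G.Invariant S) : G.Invariant (S ∩ G.anY) := by
  intro p hp
  by_contra hnb
  obtain ⟨hhead, hlast, hnd, hch⟩ := hp
  obtain ⟨q, u, m, w, r, hpe, hb⟩ := hS p ⟨hhead, hlast, hnd, hch⟩
  set C' : Set (Node d) := Node.V '' (S ∩ G.anY) with hC'def
  have hC'sub : C' ⊆ Node.V '' S := Set.image_mono Set.inter_subset_left
  have hCanc : ∀ v ∈ C', v = Node.Y ∨ Relation.TransGen G.adj v Node.Y := by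
    rintro v ⟨i, ⟨_, hi⟩, rfl⟩
    exact Or.inr hi
  have Hcol : ∀ a b c, [a, b, c] <:+: p → G.adj a b → G.adj c b →
      (b ∈ C' ∨ ∃ x, G.Desc b x ∧ x ∈ C') := by
    intro a b c hinf hab hcb
    obtain ⟨s, t, hst⟩ := hinf
    by_contra hcon
    push_neg at hcon
    exact hnb ⟨s, a, b, c, t, by rw [← hst]; simp,
      Or.inr ⟨⟨hab, hcb⟩, hcon.1, fun x hx => hcon.2 x hx⟩⟩
  rcases hb with ⟨hnc, hmC⟩ | ⟨hcoll, hnot, hdesc⟩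
  · -- non-collider blocked by V '' S
    obtain ⟨j, hjS, rfl⟩ := hmC
    have hmC' : Node.V j ∉ C' := by
      intro hmem
      exact hnb ⟨q, u, Node.V j, w, r, hpe, Or.inl ⟨hnc, hmem⟩⟩
    have hjan : j ∉ G.anY := by
      intro hjan
      exact hmC' ⟨j, ⟨hjS, hjan⟩, rfl⟩
    have hinf3 : [u, Node.V j, w] <:+: p := ⟨q, r, by rw [hpe]; simp⟩
    have hch3 : List.Chain' G.Edge [u, Node.V j, w] := hch.infix hinf3
    have heum : G.Edge u (Node.V j) := (List.isChain_cons_cons.mp hch3).1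
    have hemw : G.Edge (Node.V j) w := (List.isChain_cons_cons.mp (List.isChain_cons_cons.mp hch3).2).1
    -- derive an outgoing edge at V j
    have hout : G.adj (Node.V j) u ∨ G.adj (Node.V j) w := by
      rcases heum with hum | hmu
      · rcases hemw with hmw | hwm
        · exact Or.inr hmw
        · exact absurd ⟨hum, hwm⟩ hnc
      · exact Or.inl hmu
    rcases hout with hmu | hmw
    · -- walk backwards towards E along the reversed prefix
      have hpref : (q ++ [u, Node.V j]) <+: p := ⟨w :: r, by rw [hpe]; simp⟩
      have hrev : (q ++ [u, Node.V j]).reverse = Node.V j :: u :: q.reverse := by simp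
      have hchL : List.Chain' G.Edge (q ++ [u, Node.V j]) := hch.prefix hpref
      have hchR : List.Chain' G.Edge (Node.V j :: u :: q.reverse) := by
        rw [← hrev]; refine List.isChain_reverse.mpr ?_
        exact hchL.imp (fun a b h => Or.symm h)
      have hlastR : (Node.V j :: u :: q.reverse).getLast? = some Node.E := by
        rw [← hrev, List.getLast?_reverse]
        rw [hpe] at hhead
        cases q with
        | nil => simpa using hhead
        | cons x q' => simpa using hhead
      have hlastR' : (u :: q.reverse).getLast? = some Node.E := by
        rwa [List.getLast?_cons_cons] at hlastR
      have Hrev : ∀ a b c, G.adj a b → G.adj c b →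
          [a, b, c] <:+: (Node.V j :: u :: q.reverse) →
          (b ∈ C' ∨ ∃ x, G.Desc b x ∧ x ∈ C') := by
        intro a b c hab hcb hinf
        rw [← hrev] at hinf
        have hinf' : [c, b, a] <:+: (q ++ [u, Node.V j]) := by
          rw [← List.reverse_infix]
          simpa using hinf
        exact Hcol c b a (hinf'.trans hpref.isInfix) hcb hab
      have := walk G C' hCanc q.reverse (Node.V j) u Node.E hmu hchR.tail hlastR' Hrev
      rcases this with hY | hE
      · exact hjan hY
      · exact notTransGenE G _ hE
    · -- walk forwards towards Y along the suffix
      have hsuf : (Node.V j :: w :: r) <:+ p := ⟨q ++ [u], by rw [hpe]; simp⟩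
      have hchS : List.Chain' G.Edge (Node.V j :: w :: r) := hch.suffix hsuf
      have hlastS : (w :: r).getLast? = some Node.Y := by
        have h1 : p = (q ++ [u, Node.V j]) ++ (w :: r) := by rw [hpe]; simp
        rw [h1, List.getLast?_append] at hlast
        obtain ⟨z, hz⟩ : ∃ z, (w :: r).getLast? = some z :=
          ⟨(w :: r).getLast (by simp), List.getLast?_eq_getLast (by simp)⟩
        rw [hz] at hlast ⊢
        simpa using hlast
      have Hfor : ∀ a b c, G.adj a b → G.adj c b →
          [a, b, c] <:+: (Node.V j :: w :: r) →
          (b ∈ C' ∨ ∃ x, G.Desc b x ∧ x ∈ C') := by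
        intro a b c hab hcb hinf
        exact Hcol a b c (hinf.trans hsuf.isInfix) hab hcb
      have := walk G C' hCanc r (Node.V j) w Node.Y hmw hchS.tail hlastS Hfor
      rcases this with hY | hY <;> exact hjan hY
  · -- collider blocked by V '' S: still blocked by the smaller set C'
    refine hnb ⟨q, u, m, w, r, hpe, Or.inr ⟨hcoll, fun h => hnot (hC'sub h), ?_⟩⟩
    exact fun x hx hxC => hdesc x hx (hC'sub hxC)

/-- every minimally invariant set `S` satisfies `S ⊆ AN_Y`;
consequently, `S_AS ⊆ AN_Y`. -/
theorem minInvariant_subset_ancestors {d : ℕ} (G : CGraph d) :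
    (∀ S : Set (Fin d), G.MinInvariant S → S ⊆ G.anY) ∧ G.SAS ⊆ G.anY := by
  have main : ∀ S : Set (Fin d), G.MinInvariant S → S ⊆ G.anY := by
    intro S hS j hjS
    by_contra hj
    have hss : S ∩ G.anY ⊂ S :=
      ⟨Set.inter_subset_left, fun h => hj (h hjS).2⟩
    exact hS.2 _ hss (invariant_inter G S hS.1)
  refine ⟨main, ?_⟩
  intro j hj
  obtain ⟨S, hS, hjS⟩ := hj
  exact main S hS hjS
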